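/- Let F_{2n}(q) = Σ_{τ} q^{(ℓ(τ)-n)/2} where the sum is over fixed-point-free involutions τ in S_{2n} and ℓ(τ) is the number of inversions of τ. Then F_{2n}(q) = ∏_{k=1}^n [2k-1]_q, where [m]_q = 1 + q + ... + q^{m-1}. -/

import Mathlib

open Finset Polynomial

/-- Number of inversions of `σ`. -/
def ell {n : ℕ} (σ : Equiv.Perm (Fin n)) : ℕ :=
  (Finset.univ.filter (fun p : Fin n × Fin n => p.1 < p.2 ∧ σ p.2 < σ p.1)).card

/-- The `q`-integer `[m]_q = 1 + q + ⋯ + q^{m-1}`. -/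
noncomputable def qint (m : ℕ) : Polynomial ℤ := ∑ i ∈ Finset.range m, X ^ i

namespace FpfAux

variable {m : ℕ}

/-- The order embedding of `Fin m` into `Fin (m+2)` missing `j.castSucc` and `last`. -/
def emb (j : Fin (m + 1)) : Fin m ↪ Fin (m + 2) :=
  ⟨fun k => (j.succAbove k).castSucc, fun a b h => by
    exact Fin.succAbove_right_injective (Fin.castSucc_injective _ h)⟩

lemma emb_apply (j : Fin (m + 1)) (k : Fin m) : emb j k = (j.succAbove k).castSucc := rfl

lemma emb_lt_iff {j : Fin (m + 1)} {a b : Fin m} : emb j a < emb j b ↔ a < b := by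
  simp [emb_apply, Fin.castSucc_lt_castSucc_iff, Fin.succAbove_lt_succAbove_iff]

lemma emb_ne_castSucc (j : Fin (m + 1)) (k : Fin m) : emb j k ≠ j.castSucc := by
  simp only [emb_apply, ne_eq]
  intro h
  exact Fin.succAbove_ne j k (Fin.castSucc_injective _ h)

lemma emb_ne_last (j : Fin (m + 1)) (k : Fin m) : emb j k ≠ Fin.last (m + 1) :=
  Fin.ne_last_of_lt (Fin.castSucc_lt_last _)

lemma exists_emb_eq {j : Fin (m + 1)} {x : Fin (m + 2)} (h1 : x ≠ j.castSucc)
    (h2 : x ≠ Fin.last (m + 1)) : ∃ k, emb j k = x := by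
  obtain ⟨x', rfl⟩ : ∃ x', x'.castSucc = x := ⟨x.castPred h2, Fin.castSucc_castPred _ _⟩
  have hx' : x' ≠ j := fun h => h1 (by rw [h])
  obtain ⟨k, hk⟩ := Fin.exists_succAbove_eq hx'
  exact ⟨k, by rw [emb_apply, hk]⟩

lemma cases3 (j : Fin (m + 1)) (x : Fin (m + 2)) :
    x = j.castSucc ∨ x = Fin.last (m + 1) ∨ ∃ k, emb j k = x := by
  by_cases h1 : x = j.castSucc
  · exact Or.inl h1
  by_cases h2 : x = Fin.last (m + 1)
  · exact Or.inr (Or.inl h2)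
  exact Or.inr (Or.inr (exists_emb_eq h1 h2))

/-- Build an FPF involution of `Fin (m+2)` from one of `Fin m` and the partner `j` of the
last element. -/
def build (j : Fin (m + 1)) (σ : Equiv.Perm (Fin m)) : Equiv.Perm (Fin (m + 2)) :=
  Equiv.swap (Fin.last (m + 1)) j.castSucc * σ.viaFintypeEmbedding (emb j)

lemma build_emb (j : Fin (m + 1)) (σ : Equiv.Perm (Fin m)) (k : Fin m) :
    build j σ (emb j k) = emb j (σ k) := by
  rw [build, Equiv.Perm.mul_apply, Equiv.Perm.viaFintypeEmbedding_apply_image,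
    Equiv.swap_apply_of_ne_of_ne (emb_ne_last j (σ k)) (emb_ne_castSucc j (σ k))]

lemma build_last (j : Fin (m + 1)) (σ : Equiv.Perm (Fin m)) :
    build j σ (Fin.last (m + 1)) = j.castSucc := by
  rw [build, Equiv.Perm.mul_apply, Equiv.Perm.viaFintypeEmbedding_apply_notMem_range,
    Equiv.swap_apply_left]
  rintro ⟨k, hk⟩
  exact emb_ne_last j k hk

lemma build_castSucc (j : Fin (m + 1)) (σ : Equiv.Perm (Fin m)) :
    build j σ j.castSucc = Fin.last (m + 1) := by
  rw [build, Equiv.Perm.mul_apply, Equiv.Perm.viaFintypeEmbedding_apply_notMem_range,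
    Equiv.swap_apply_right]
  rintro ⟨k, hk⟩
  exact emb_ne_castSucc j k hk

lemma build_mul_self (j : Fin (m + 1)) (σ : Equiv.Perm (Fin m)) (hσ : σ * σ = 1) :
    build j σ * build j σ = 1 := by
  have hσ' : ∀ k, σ (σ k) = k := fun k => by
    rw [← Equiv.Perm.mul_apply, hσ, Equiv.Perm.one_apply]
  ext x
  rw [Equiv.Perm.mul_apply, Equiv.Perm.one_apply]
  rcases cases3 j x with rfl | rfl | ⟨k, rfl⟩
  · rw [build_castSucc, build_last]
  · rw [build_last, build_castSucc]
  · rw [build_emb, build_emb, hσ']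

lemma build_fpf (j : Fin (m + 1)) (σ : Equiv.Perm (Fin m)) (hσ : ∀ k, σ k ≠ k) :
    ∀ x, build j σ x ≠ x := by
  intro x
  rcases cases3 j x with rfl | rfl | ⟨k, rfl⟩
  · rw [build_castSucc]
    exact (Fin.castSucc_lt_last j).ne'
  · rw [build_last]
    exact Fin.ne_last_of_lt (Fin.castSucc_lt_last j) -- j.castSucc ≠ last
  · rw [build_emb]
    exact fun h => hσ k ((emb j).injective h)

lemma ell_build (j : Fin (m + 1)) (σ : Equiv.Perm (Fin m)) :
    ell (build j σ) = ell σ + ((m + 1 - (j : ℕ)) + (m - (j : ℕ))) := by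
  classical
  set τ := build j σ with hτdef
  have hτjc : τ j.castSucc = Fin.last (m + 1) := build_castSucc j σ
  have hτlast : τ (Fin.last (m + 1)) = j.castSucc := build_last j σ
  have hτemb : ∀ k, τ (emb j k) = emb j (σ k) := build_emb j σ
  have main : (Finset.univ.filter
        (fun p : Fin (m + 2) × Fin (m + 2) => p.1 < p.2 ∧ τ p.2 < τ p.1))
      = (((Finset.univ.filter (fun p : Fin m × Fin m => p.1 < p.2 ∧ σ p.2 < σ p.1)).image
            (Prod.map (emb j) (emb j)))
          ∪ ((Finset.univ.filter (fun i : Fin (m + 2) => j.castSucc < τ i)).image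
              (fun i => (i, Fin.last (m + 1)))))
        ∪ ((Finset.Ioo j.castSucc (Fin.last (m + 1))).image (fun y => (j.castSucc, y))) := by
    ext ⟨x, y⟩
    simp only [mem_filter, mem_union, mem_image, mem_univ, true_and, Finset.mem_Ioo,
      Prod.map, Prod.mk.injEq, Prod.exists]
    constructor
    · rintro ⟨hxy, hinv⟩
      by_cases hy : y = Fin.last (m + 1)
      · subst hy
        rw [hτlast] at hinv
        exact Or.inl (Or.inr ⟨x, hinv, rfl, rfl⟩)
      by_cases hx : x = j.castSucc
      · subst hx
        exact Or.inr ⟨y, ⟨hxy, lt_of_le_of_ne (Fin.le_last y) hy⟩, rfl, rfl⟩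
      have hxlast : x ≠ Fin.last (m + 1) := Fin.ne_last_of_lt hxy
      have hyjc : y ≠ j.castSucc := by
        rintro rfl
        rw [hτjc] at hinv
        exact absurd (Fin.le_last (τ x)) (not_le.mpr hinv)
      obtain ⟨a, rfl⟩ := exists_emb_eq hx hxlast
      obtain ⟨b, rfl⟩ := exists_emb_eq hyjc hy
      rw [hτemb, hτemb] at hinv
      exact Or.inl (Or.inl ⟨a, b, ⟨emb_lt_iff.mp hxy, emb_lt_iff.mp hinv⟩, rfl, rfl⟩)
    · rintro ((⟨a, b, ⟨hab, hba⟩, rfl, rfl⟩ | ⟨i, hi, rfl, rfl⟩) | ⟨z, ⟨hz1, hz2⟩, rfl, rfl⟩)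
      · rw [hτemb, hτemb]
        exact ⟨emb_lt_iff.mpr hab, emb_lt_iff.mpr hba⟩
      · have hine : i ≠ Fin.last (m + 1) := by
          rintro rfl
          rw [hτlast] at hi
          exact lt_irrefl _ hi
        refine ⟨lt_of_le_of_ne (Fin.le_last i) hine, ?_⟩
        rw [hτlast]
        exact hi
      · refine ⟨hz1, ?_⟩
        rw [hτjc]
        have : τ z ≠ Fin.last (m + 1) := by
          intro h
          have := τ.injective (h.trans hτjc.symm)
          exact (ne_of_gt hz1) this
        exact lt_of_le_of_ne (Fin.le_last _) this
  have hd1 : Disjoint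
      ((Finset.univ.filter (fun p : Fin m × Fin m => p.1 < p.2 ∧ σ p.2 < σ p.1)).image
        (Prod.map (emb j) (emb j)))
      ((Finset.univ.filter (fun i : Fin (m + 2) => j.castSucc < τ i)).image
        (fun i => (i, Fin.last (m + 1)))) := by
    rw [Finset.disjoint_left]
    rintro ⟨x, y⟩ h1 h2
    simp only [mem_image, Prod.map, Prod.mk.injEq, Prod.exists] at h1 h2
    obtain ⟨a, b, _, _, rfl⟩ := h1
    obtain ⟨i, _, _, h⟩ := h2
    exact emb_ne_last j b h.symm
  have hd2 : Disjoint
      ((((Finset.univ.filter (fun p : Fin m × Fin m => p.1 < p.2 ∧ σ p.2 < σ p.1)).image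
            (Prod.map (emb j) (emb j)))
          ∪ ((Finset.univ.filter (fun i : Fin (m + 2) => j.castSucc < τ i)).image
              (fun i => (i, Fin.last (m + 1))))))
      ((Finset.Ioo j.castSucc (Fin.last (m + 1))).image (fun y => (j.castSucc, y))) := by
    rw [Finset.disjoint_left]
    rintro ⟨x, y⟩ h1 h2
    simp only [mem_union, mem_image, Prod.map, Prod.mk.injEq, Prod.exists, mem_filter,
      Finset.mem_Ioo, mem_univ, true_and] at h1 h2
    obtain ⟨z, ⟨_, hz2⟩, rfl, rfl⟩ := h2
    rcases h1 with ⟨a, b, _, h, _⟩ | ⟨i, _, _, h⟩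
    · exact emb_ne_castSucc j a h
    · exact (ne_of_lt hz2) h.symm
  have hinj1 : Function.Injective (Prod.map (emb j) (emb j) : Fin m × Fin m → _) :=
    Function.Injective.prodMap (emb j).injective (emb j).injective
  have hinj2 : Function.Injective (fun i : Fin (m + 2) => (i, Fin.last (m + 1))) :=
    fun a b h => (Prod.mk.injEq _ _ _ _ ▸ h).1
  have hinj3 : Function.Injective (fun y : Fin (m + 2) => (j.castSucc, y)) :=
    fun a b h => (Prod.mk.injEq _ _ _ _ ▸ h).2
  have hcard2 : (Finset.univ.filter (fun i : Fin (m + 2) => j.castSucc < τ i)).card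
      = m + 1 - (j : ℕ) := by
    have : (Finset.univ.filter (fun i : Fin (m + 2) => j.castSucc < τ i)).card
        = (Finset.Ioi j.castSucc).card := by
      refine Finset.card_nbij (fun i => τ i) ?_ (τ.injective.injOn) ?_
      · intro a ha
        simp only [Finset.mem_coe, mem_filter, mem_univ, true_and] at ha
        exact Finset.mem_Ioi.mpr ha
      · intro v hv
        simp only [Finset.coe_Ioi, Set.mem_Ioi] at hv
        refine ⟨τ.symm v, ?_, by simp⟩
        simp only [Finset.coe_filter, Set.mem_setOf_eq, mem_univ, true_and,
          Equiv.apply_symm_apply]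
        exact hv
    rw [this, Fin.card_Ioi]
    simp
  rw [ell, main, Finset.card_union_of_disjoint hd2, Finset.card_union_of_disjoint hd1,
    Finset.card_image_of_injective _ hinj1, Finset.card_image_of_injective _ hinj2,
    Finset.card_image_of_injective _ hinj3, hcard2, Fin.card_Ioo]
  have hj := j.isLt
  simp only [Fin.val_last, Fin.coe_castSucc]
  rw [ell]
  omega

end FpfAux

lemma half_le_ell {n : ℕ} (σ : Equiv.Perm (Fin (2 * n))) (h1 : σ * σ = 1)
    (h2 : ∀ i, σ i ≠ i) : n ≤ ell σ := by
  classical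
  have hinv : ∀ k, σ (σ k) = k := fun k => by
    rw [← Equiv.Perm.mul_apply, h1, Equiv.Perm.one_apply]
  have hA : (Finset.univ.filter (fun i : Fin (2 * n) => i < σ i)).card = n := by
    have hswap : (Finset.univ.filter (fun i : Fin (2 * n) => i < σ i)).card
        = (Finset.univ.filter (fun i : Fin (2 * n) => σ i < i)).card := by
      refine Finset.card_nbij (fun i => σ i) ?_ (σ.injective.injOn) ?_
      · intro a ha
        simp only [Finset.mem_coe, mem_filter, mem_univ, true_and] at ha ⊢
        rw [hinv]
        exact ha
      · intro v hv
        simp only [Finset.coe_filter, mem_univ, true_and, Set.mem_setOf_eq] at hv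
        refine ⟨σ v, ?_, hinv v⟩
        simp only [Finset.coe_filter, mem_univ, true_and, Set.mem_setOf_eq, hinv]
        exact hv
    have hneg : Finset.univ.filter (fun i : Fin (2 * n) => ¬ i < σ i)
        = Finset.univ.filter (fun i : Fin (2 * n) => σ i < i) := by
      apply Finset.filter_congr
      intro i _
      simp only [not_lt]
      exact ⟨fun h => lt_of_le_of_ne h (h2 i), le_of_lt⟩
    have htot := Finset.card_filter_add_card_filter_not
      (s := (Finset.univ : Finset (Fin (2 * n)))) (fun i : Fin (2 * n) => i < σ i)
    rw [hneg, ← hswap, Finset.card_univ, Fintype.card_fin] at htot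
    omega
  have hsub : (Finset.univ.filter (fun i : Fin (2 * n) => i < σ i)).image
      (fun i => (i, σ i)) ⊆
      Finset.univ.filter (fun p : Fin (2 * n) × Fin (2 * n) => p.1 < p.2 ∧ σ p.2 < σ p.1) := by
    intro p hp
    simp only [mem_image, mem_filter, mem_univ, true_and] at hp ⊢
    obtain ⟨i, hi, rfl⟩ := hp
    exact ⟨hi, by rw [hinv]; exact hi⟩
  calc n = ((Finset.univ.filter (fun i : Fin (2 * n) => i < σ i)).image
      (fun i => (i, σ i))).card := by
        rw [Finset.card_image_of_injective _ (fun a b h => (Prod.mk.injEq _ _ _ _ ▸ h).1), hA]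
    _ ≤ _ := Finset.card_le_card hsub

/-- `Σ_τ q^{(ℓ(τ)-n)/2} = ∏_{k=1}^n [2k-1]_q`, summing over fixed-point-free
involutions `τ ∈ S_{2n}`. -/
theorem fpf_rank_generating_function (n : ℕ) :
    ∑ τ ∈ Finset.univ.filter
        (fun τ : Equiv.Perm (Fin (2 * n)) => τ * τ = 1 ∧ ∀ i, τ i ≠ i),
      (X : Polynomial ℤ) ^ ((ell τ - n) / 2)
    = ∏ k ∈ Finset.range n, qint (2 * k + 1) := by
  induction n with
  | zero =>
    have h0 : ∀ τ : Equiv.Perm (Fin (2 * 0)), τ = 1 := fun τ => Equiv.ext fun i => i.elim0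
    rw [Finset.range_zero, Finset.prod_empty]
    rw [show (Finset.univ : Finset (Equiv.Perm (Fin (2 * 0)))) = {1} from
      Finset.eq_singleton_iff_unique_mem.mpr ⟨Finset.mem_univ _, fun x _ => h0 x⟩]
    rw [Finset.filter_singleton, if_pos ⟨mul_one 1, fun i => i.elim0⟩, Finset.sum_singleton]
    have hell : ell (1 : Equiv.Perm (Fin (2 * 0))) = 0 := by
      rw [ell]
      convert Finset.card_empty
      ext p
      exact p.1.elim0
    rw [hell]
    norm_num
  | succ n ih =>
    have hq : ∑ j : Fin (2 * n + 1), (X : Polynomial ℤ) ^ (2 * n - (j : ℕ))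
        = qint (2 * n + 1) := by
      rw [Fin.sum_univ_eq_sum_range (fun i => (X : Polynomial ℤ) ^ (2 * n - i)) (2 * n + 1),
        qint]
      exact Finset.sum_range_reflect (fun i => (X : Polynomial ℤ) ^ i) (2 * n + 1)
    have hstep :
        ∑ τ ∈ Finset.univ.filter
            (fun τ : Equiv.Perm (Fin (2 * n + 2)) => τ * τ = 1 ∧ ∀ i, τ i ≠ i),
          (X : Polynomial ℤ) ^ ((ell τ - (n + 1)) / 2)
        = ∑ p ∈ (Finset.univ.filter
            (fun σ : Equiv.Perm (Fin (2 * n)) => σ * σ = 1 ∧ ∀ i, σ i ≠ i)) ×ˢ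
            (Finset.univ : Finset (Fin (2 * n + 1))),
          (X : Polynomial ℤ) ^ ((ell p.1 - n) / 2) * X ^ (2 * n - (p.2 : ℕ)) := by
      refine (Finset.sum_bij (fun p _ => FpfAux.build p.2 p.1) ?_ ?_ ?_ ?_).symm
      · rintro ⟨σ, j⟩ hp
        rw [Finset.mem_product, Finset.mem_filter] at hp
        obtain ⟨⟨-, hσ1, hσ2⟩, -⟩ := hp
        rw [Finset.mem_filter]
        exact ⟨Finset.mem_univ _, FpfAux.build_mul_self j σ hσ1, FpfAux.build_fpf j σ hσ2⟩
      · rintro ⟨σ, j⟩ hp ⟨σ', j'⟩ hq heq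
        have hj : j = j' := by
          have := congrArg (fun e : Equiv.Perm (Fin (2 * n + 2)) => e (Fin.last (2 * n + 1))) heq
          simp only [FpfAux.build_last] at this
          exact Fin.castSucc_injective _ this
        subst hj
        have hσ : σ = σ' := by
          ext k
          have := congrArg (fun e : Equiv.Perm (Fin (2 * n + 2)) => e (FpfAux.emb j k)) heq
          simp only [FpfAux.build_emb] at this
          exact congrArg Fin.val ((FpfAux.emb j).injective this)
        subst hσ
        rfl
      · intro τ hτ
        rw [Finset.mem_filter] at hτ
        obtain ⟨-, h1, h2⟩ := hτ
        have hinv : ∀ x, τ (τ x) = x := fun x => by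
          rw [← Equiv.Perm.mul_apply, h1, Equiv.Perm.one_apply]
        have hlast : τ (Fin.last (2 * n + 1)) ≠ Fin.last (2 * n + 1) := h2 _
        set j : Fin (2 * n + 1) := (τ (Fin.last (2 * n + 1))).castPred hlast with hjdef
        have hjc : j.castSucc = τ (Fin.last (2 * n + 1)) := Fin.castSucc_castPred _ _
        have hτjc : τ j.castSucc = Fin.last (2 * n + 1) := by rw [hjc, hinv]
        have hne1 : ∀ k, τ (FpfAux.emb j k) ≠ Fin.last (2 * n + 1) := by
          intro k h
          have : FpfAux.emb j k = τ (Fin.last (2 * n + 1)) := by rw [← h, hinv]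
          exact FpfAux.emb_ne_castSucc j k (this.trans hjc.symm)
        have hne2 : ∀ k, (τ (FpfAux.emb j k)).castPred (hne1 k) ≠ j := by
          intro k h
          have h' : τ (FpfAux.emb j k) = j.castSucc := by
            rw [← Fin.castSucc_castPred (τ (FpfAux.emb j k)) (hne1 k), h]
          have : FpfAux.emb j k = Fin.last (2 * n + 1) := by
            rw [← hτjc, ← h', hinv]
          exact FpfAux.emb_ne_last j k this
        set g : Fin (2 * n) → Fin (2 * n) := fun k =>
          (finSuccAboveEquiv j).symm ⟨(τ (FpfAux.emb j k)).castPred (hne1 k), hne2 k⟩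
          with hgdef
        have hg : ∀ k, FpfAux.emb j (g k) = τ (FpfAux.emb j k) := by
          intro k
          have h2' := (finSuccAboveEquiv j).apply_symm_apply
            ⟨(τ (FpfAux.emb j k)).castPred (hne1 k), hne2 k⟩
          rw [finSuccAboveEquiv_apply] at h2'
          have happ : j.succAbove (g k) = (τ (FpfAux.emb j k)).castPred (hne1 k) :=
            congrArg Subtype.val h2'
          show (j.succAbove (g k)).castSucc = _
          rw [happ, Fin.castSucc_castPred]
        have hgg : ∀ k, g (g k) = k := by
          intro k
          apply (FpfAux.emb j).injective
          rw [hg, hg, hinv]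
        refine ⟨(⟨g, g, hgg, hgg⟩, j), ?_, ?_⟩
        · rw [Finset.mem_product, Finset.mem_filter]
          refine ⟨⟨Finset.mem_univ _, ?_, ?_⟩, Finset.mem_univ _⟩
          · ext k
            exact congrArg Fin.val (hgg k)
          · intro k hk
            have : FpfAux.emb j (g k) = FpfAux.emb j k := by
              rw [show g k = k from hk]
            rw [hg] at this
            exact h2 (FpfAux.emb j k) this
        · ext x
          rcases FpfAux.cases3 j x with rfl | rfl | ⟨k, rfl⟩
          · rw [FpfAux.build_castSucc, hτjc]
          · rw [FpfAux.build_last, hjc]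
          · rw [FpfAux.build_emb]
            exact congrArg Fin.val (hg k)
      · rintro ⟨σ, j⟩ hp
        rw [Finset.mem_product, Finset.mem_filter] at hp
        obtain ⟨⟨-, hσ1, hσ2⟩, -⟩ := hp
        rw [← pow_add]
        congr 1
        rw [FpfAux.ell_build]
        have hle : n ≤ ell σ := half_le_ell σ hσ1 hσ2
        have hj : (j : ℕ) ≤ 2 * n := by omega
        have harith : ell σ + (2 * n + 1 - (j : ℕ) + (2 * n - (j : ℕ))) - (n + 1)
            = (ell σ - n) + (2 * n - (j : ℕ)) * 2 := by omega
        rw [harith, Nat.add_mul_div_right _ _ (by norm_num : 0 < 2)]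
    rw [show (2 : ℕ) * (n + 1) = 2 * n + 2 from rfl] at *
    rw [hstep, Finset.sum_product]
    simp only [← Finset.mul_sum]
    rw [hq, ← Finset.sum_mul, ih, Finset.prod_range_succ]
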